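/- Let X be a random vector in ℝ^d with E‖X‖² < ∞, mean m_x := E[X] and covariance matrix Σ_x := Cov(X), and let ω be an MCAR mask with probability vector p ∈ (0,1]^d, independent of X. Then the zero-imputed vector X^NA := X ⊙ ω satisfies E[X^NA] = P m_x and Cov(X^NA) = P Σ_x P + P(I_d − P) diag(Σ_x) + P(I_d − P) diag(m_x) diag(m_x). -/

import Mathlib

open MeasureTheory ProbabilityTheory Matrix

/-- The mean vector of a random vector, defined coordinatewise. -/
noncomputable def meanVec {Ω : Type*} [MeasurableSpace Ω] (μ : Measure Ω) {d : ℕ}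
    (X : Ω → Fin d → ℝ) : Fin d → ℝ :=
  fun i => ∫ a, X a i ∂μ

/-- The covariance matrix `E[(X - EX)(X - EX)ᵀ]` of a random vector, defined entrywise. -/
noncomputable def covMatrix {Ω : Type*} [MeasurableSpace Ω] (μ : Measure Ω) {d : ℕ}
    (X : Ω → Fin d → ℝ) : Matrix (Fin d) (Fin d) ℝ :=
  Matrix.of fun i j => ∫ a, (X a i - meanVec μ X i) * (X a j - meanVec μ X j) ∂μ

/-- Expansion of a centered second moment integral. -/
lemma integral_sub_mul_sub {Ω : Type*} [MeasurableSpace Ω] (μ : Measure Ω)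
    [IsProbabilityMeasure μ] (f g : Ω → ℝ) (c e : ℝ)
    (hfg : Integrable (fun a => f a * g a) μ) (hf : Integrable f μ) (hg : Integrable g μ) :
    ∫ a, (f a - c) * (g a - e) ∂μ
      = (∫ a, f a * g a ∂μ) - c * (∫ a, g a ∂μ) - e * (∫ a, f a ∂μ) + c * e := by
  have h1 : (fun a => (f a - c) * (g a - e))
      = fun a => f a * g a - c * g a - e * f a + c * e := by
    funext a; ring
  rw [h1, integral_add, integral_sub, integral_sub, integral_const_mul, integral_const_mul,
    integral_const]
  · simp
  · exact hfg
  · exact hg.const_mul c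
  · exact (hfg.sub (hg.const_mul c))
  · exact hf.const_mul e
  · exact ((hfg.sub (hg.const_mul c)).sub (hf.const_mul e))
  · exact integrable_const _

/-- **Mean and covariance of a zero-imputed MCAR-masked vector.**
If `X` is a random vector in `ℝ^d` with `E‖X‖² < ∞`, mean `m_x` and covariance `Σ_x`, and `W`
is an MCAR mask with probability vector `p ∈ (0,1]^d`, independent of `X`, then the zero-imputed
vector `X ⊙ W` satisfies `E[X⊙W] = P m_x` and
`Cov(X⊙W) = P Σ_x P + P(I - P) diag(Σ_x) + P(I - P) diag(m_x) diag(m_x)`. -/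
theorem mean_cov_hadamard_mcar_mask
    {Ω : Type*} [MeasurableSpace Ω] (μ : Measure Ω) [IsProbabilityMeasure μ]
    {d : ℕ} (X W : Ω → Fin d → ℝ) (p : Fin d → ℝ)
    (hp : ∀ i, p i ∈ Set.Ioc (0 : ℝ) 1)
    (hXmeas : Measurable X) (hWmeas : Measurable W)
    (hX2 : Integrable (fun a => ∑ i, (X a i) ^ 2) μ)
    (hW01 : ∀ᵐ a ∂μ, ∀ i, W a i = 0 ∨ W a i = 1)
    (hWber : ∀ i, μ {a | W a i = 1} = ENNReal.ofReal (p i))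
    (hWiIndep : iIndepFun (fun i a => W a i) μ)
    (hIndep : IndepFun W X μ) :
    meanVec μ (fun a i => X a i * W a i) = Matrix.diagonal p *ᵥ meanVec μ X ∧
    covMatrix μ (fun a i => X a i * W a i) =
      Matrix.diagonal p * covMatrix μ X * Matrix.diagonal p
        + Matrix.diagonal p * (1 - Matrix.diagonal p)
            * Matrix.diagonal (fun i => covMatrix μ X i i)
        + Matrix.diagonal p * (1 - Matrix.diagonal p)
            * (Matrix.diagonal (meanVec μ X) * Matrix.diagonal (meanVec μ X)) := by
  -- basic measurability
  have hXim : ∀ i, Measurable fun a => X a i := fun i => (measurable_pi_apply i).comp hXmeas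
  have hWim : ∀ i, Measurable fun a => W a i := fun i => (measurable_pi_apply i).comp hWmeas
  -- integrability of coordinates and products
  have hXij_int : ∀ i j, Integrable (fun a => X a i * X a j) μ := by
    intro i j
    refine hX2.mono' ((hXim i).mul (hXim j)).aestronglyMeasurable ?_
    filter_upwards with a
    have h1 : |X a i * X a j| ≤ ((X a i) ^ 2 + (X a j) ^ 2) / 2 := by
      rw [abs_mul]
      nlinarith [abs_nonneg (X a i), abs_nonneg (X a j), sq_abs (X a i), sq_abs (X a j),
        sq_nonneg (|X a i| - |X a j|)]
    have h2 : (X a i) ^ 2 ≤ ∑ k, (X a k) ^ 2 :=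
      Finset.single_le_sum (f := fun k => (X a k) ^ 2) (fun k _ => sq_nonneg _) (Finset.mem_univ i)
    have h3 : (X a j) ^ 2 ≤ ∑ k, (X a k) ^ 2 :=
      Finset.single_le_sum (f := fun k => (X a k) ^ 2) (fun k _ => sq_nonneg _) (Finset.mem_univ j)
    have h4 : ∀ k, (0:ℝ) ≤ (X a k) ^ 2 := fun k => sq_nonneg _
    calc ‖X a i * X a j‖ = |X a i * X a j| := rfl
      _ ≤ ((X a i) ^ 2 + (X a j) ^ 2) / 2 := h1
      _ ≤ ∑ k, (X a k) ^ 2 := by linarith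
  have hXi_int : ∀ i, Integrable (fun a => X a i) μ := by
    intro i
    refine ((integrable_const (1:ℝ)).add (hXij_int i i)).mono'
      (hXim i).aestronglyMeasurable ?_
    filter_upwards with a
    simp only [Pi.add_apply]
    rw [Real.norm_eq_abs]
    nlinarith [abs_nonneg (X a i), sq_abs (X a i), sq_nonneg (|X a i| - 1)]
  have hWbd : ∀ i, ∀ᵐ a ∂μ, ‖W a i‖ ≤ 1 := by
    intro i
    filter_upwards [hW01] with a ha
    rcases ha i with h | h <;> simp [h]
  have hWi_int : ∀ i, Integrable (fun a => W a i) μ := fun i =>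
    (integrable_const (1:ℝ)).mono' (hWim i).aestronglyMeasurable (hWbd i)
  have hWWi_int : ∀ i j, Integrable (fun a => W a i * W a j) μ := by
    intro i j
    refine (integrable_const (1:ℝ)).mono' ((hWim i).mul (hWim j)).aestronglyMeasurable ?_
    filter_upwards [hW01] with a ha
    rcases ha i with h | h <;> rcases ha j with h' | h' <;> simp [h, h']
  -- mean of W coordinates
  have hEW : ∀ i, ∫ a, W a i ∂μ = p i := by
    intro i
    have hmeas : MeasurableSet {a | W a i = 1} := (hWim i) (measurableSet_singleton 1)
    have hcongr : (fun a => W a i) =ᵐ[μ] Set.indicator {a | W a i = 1} (fun _ => (1:ℝ)) := by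
      filter_upwards [hW01] with a ha
      rcases ha i with h | h
      · rw [h, Set.indicator_of_notMem]
        simp [Set.mem_setOf_eq, h]
      · rw [h, Set.indicator_of_mem]
        exact h
    rw [integral_congr_ae hcongr, integral_indicator_const _ hmeas, measureReal_def, hWber i, smul_eq_mul,
      mul_one, ENNReal.toReal_ofReal (hp i).1.le]
  -- second moments of W
  have hEWW : ∀ i j, ∫ a, W a i * W a j ∂μ = if i = j then p i else p i * p j := by
    intro i j
    by_cases h : i = j
    · subst h
      rw [if_pos rfl]
      have : (fun a => W a i * W a i) =ᵐ[μ] fun a => W a i := by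
        filter_upwards [hW01] with a ha
        rcases ha i with h | h <;> simp [h]
      rw [integral_congr_ae this, hEW]
    · simp only [if_neg h]
      have hind : IndepFun (fun a => W a i) (fun a => W a j) μ := hWiIndep.indepFun h
      have := hind.integral_mul_eq_mul_integral (hWi_int i).aestronglyMeasurable (hWi_int j).aestronglyMeasurable
      simp only [Pi.mul_apply] at this
      rw [this,
        hEW, hEW]
  -- independence of products
  have hEXW : ∀ i, ∫ a, X a i * W a i ∂μ = p i * meanVec μ X i := by
    intro i
    have hind : IndepFun (fun a => X a i) (fun a => W a i) μ :=
      (hIndep.symm).comp (measurable_pi_apply i) (measurable_pi_apply i)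
    have := hind.integral_mul_eq_mul_integral (hXi_int i).aestronglyMeasurable (hWi_int i).aestronglyMeasurable
    simp only [Pi.mul_apply] at this
    rw [this,
      hEW, meanVec]
    ring
  have hEXXWW : ∀ i j, ∫ a, (X a i * X a j) * (W a i * W a j) ∂μ
      = (∫ a, X a i * X a j ∂μ) * ∫ a, W a i * W a j ∂μ := by
    intro i j
    have hind : IndepFun (fun a => X a i * X a j) (fun a => W a i * W a j) μ := by
      exact (hIndep.symm).comp
        (φ := fun x : Fin d → ℝ => x i * x j) (ψ := fun x : Fin d → ℝ => x i * x j)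
        ((measurable_pi_apply i).mul (measurable_pi_apply j))
        ((measurable_pi_apply i).mul (measurable_pi_apply j))
    have := hind.integral_mul_eq_mul_integral (hXij_int i j).aestronglyMeasurable (hWWi_int i j).aestronglyMeasurable
    simpa only [Pi.mul_apply] using this
  -- integrability of masked coordinates and products
  have hXWi_int : ∀ i, Integrable (fun a => X a i * W a i) μ := by
    intro i
    refine (hXi_int i).abs.mono' ((hXim i).mul (hWim i)).aestronglyMeasurable ?_
    filter_upwards [hWbd i] with a ha
    calc ‖X a i * W a i‖ = ‖X a i‖ * ‖W a i‖ := norm_mul _ _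
      _ ≤ ‖X a i‖ * 1 := by gcongr
      _ = |X a i| := mul_one _
  have hXWij_int : ∀ i j, Integrable (fun a => (X a i * W a i) * (X a j * W a j)) μ := by
    intro i j
    refine (hXij_int i j).abs.mono'
      (((hXim i).mul (hWim i)).mul ((hXim j).mul (hWim j))).aestronglyMeasurable ?_
    filter_upwards [hWbd i, hWbd j] with a hi hj
    have h0 : ‖X a i * W a i * (X a j * W a j)‖ = ‖X a i‖ * ‖W a i‖ * (‖X a j‖ * ‖W a j‖) := by
      simp [norm_mul]
    rw [h0]
    calc ‖X a i‖ * ‖W a i‖ * (‖X a j‖ * ‖W a j‖)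
        ≤ ‖X a i‖ * 1 * (‖X a j‖ * 1) := by
          gcongr
      _ = ‖X a i‖ * ‖X a j‖ := by ring
      _ = |X a i * X a j| := by rw [abs_mul]; rfl
  -- the key moment relation for X: E[X_i X_j] = Σ_ij + m_i m_j
  have hcov : ∀ i j, covMatrix μ X i j
      = (∫ a, X a i * X a j ∂μ) - meanVec μ X i * meanVec μ X j := by
    intro i j
    have := integral_sub_mul_sub μ (fun a => X a i) (fun a => X a j)
      (meanVec μ X i) (meanVec μ X j) (hXij_int i j) (hXi_int i) (hXi_int j)
    simp only [covMatrix, Matrix.of_apply]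
    rw [this]
    show (∫ a, X a i * X a j ∂μ) - meanVec μ X i * (meanVec μ X j)
      - meanVec μ X j * (meanVec μ X i) + meanVec μ X i * meanVec μ X j = _
    ring
  -- mean statement
  have hmean : meanVec μ (fun a i => X a i * W a i) = Matrix.diagonal p *ᵥ meanVec μ X := by
    funext i
    rw [show meanVec μ (fun a i => X a i * W a i) i = ∫ a, X a i * W a i ∂μ from rfl,
      hEXW i, Matrix.mulVec_diagonal]
  refine ⟨hmean, ?_⟩
  -- covariance statement
  ext i j
  have hLHS : covMatrix μ (fun a i => X a i * W a i) i j
      = (∫ a, X a i * X a j ∂μ) * (∫ a, W a i * W a j ∂μ)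
        - (p i * meanVec μ X i) * (p j * meanVec μ X j) := by
    have hm : ∀ k, meanVec μ (fun a i => X a i * W a i) k = p k * meanVec μ X k := by
      intro k; rw [hmean, Matrix.mulVec_diagonal]
    have := integral_sub_mul_sub μ (fun a => X a i * W a i) (fun a => X a j * W a j)
      (p i * meanVec μ X i) (p j * meanVec μ X j) (hXWij_int i j) (hXWi_int i) (hXWi_int j)
    have hre : (fun a => (X a i * W a i) * (X a j * W a j))
        = fun a => (X a i * X a j) * (W a i * W a j) := by funext a; ring
    simp only [covMatrix, Matrix.of_apply, hm]
    rw [this, hEXW i, hEXW j]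
    rw [show (∫ a, (X a i * W a i) * (X a j * W a j) ∂μ)
      = ∫ a, (X a i * X a j) * (W a i * W a j) ∂μ from by rw [hre]]
    rw [hEXXWW]
    ring
  have h1 : (1 : Matrix (Fin d) (Fin d) ℝ) - Matrix.diagonal p
      = Matrix.diagonal (fun k => 1 - p k) := by
    ext a b
    by_cases h : a = b <;> simp [Matrix.one_apply, Matrix.diagonal_apply, Matrix.sub_apply, h]
  have hEXX : (∫ a, X a i * X a j ∂μ)
      = covMatrix μ X i j + meanVec μ X i * meanVec μ X j := by
    rw [hcov i j]; ring
  rw [hLHS, hEXX, hEWW, h1]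
  simp only [Matrix.add_apply, Matrix.diagonal_mul_diagonal, Matrix.mul_diagonal,
    Matrix.diagonal_mul, Matrix.diagonal_apply]
  by_cases h : i = j
  · subst h
    simp only [eq_self_iff_true, if_true]
    ring
  · simp only [if_neg h]
    ring
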